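/- For all complex numbers a and x, (x^2 + 2ax - 2a^2)^5 + (i x^2 - 2ax + 2i a^2)^5 = (x^2 - 2ax - 2a^2)^5 + (i x^2 + 2ax + 2i a^2)^5. -/
import Mathlib

theorem stmt_0 (a x : ℂ) :
    (x^2 + 2*a*x - 2*a^2)^5 + (Complex.I*x^2 - 2*a*x + 2*Complex.I*a^2)^5 =
    (x^2 - 2*a*x - 2*a^2)^5 + (Complex.I*x^2 + 2*a*x + 2*Complex.I*a^2)^5 := by
  have h3 : Complex.I^3 = -Complex.I := by
    rw [pow_succ, Complex.I_sq]; ring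
  have h4 : Complex.I^4 = 1 := by
    rw [show (4:ℕ) = 2*2 by rfl, pow_mul, Complex.I_sq]; ring
  have h5 : Complex.I^5 = Complex.I := by
    rw [pow_succ, h4]; ring
  ring_nf
  rw [h3, h4, h5, Complex.I_sq]
  ring
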